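/- Let ℓ ≥ 0 be an integer and 𝔮 = (x_{1n}, …, x_{mn}) the ideal of R generated by the entries of the last column of X. Then μ_R(𝔮·Q^ℓ) = μ_R(Q^{ℓ+1}) = C(m+ℓ, ℓ+1). In particular, the power Q^{ℓ+1} is minimally generated by the C(m+ℓ, ℓ+1) monomials of degree ℓ+1 in x_{11}, …, x_{m1}. -/

import Mathlib

set_option synthInstance.maxHeartbeats 1000000

noncomputable section

open MvPolynomial

/-- The minimal number of generators of an ideal `I`, i.e. the least cardinality of a
finite generating set of `I`. -/
def idealMu {A : Type*} [CommRing A] (I : Ideal A) : ℕ :=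
  sInf {c : ℕ | ∃ s : Finset A, s.card = c ∧ Ideal.span (s : Set A) = I}

variable (k : Type*) [Field k] (m n : ℕ)

/-- The ideal `I₂(X)` of `2 × 2` minors of the generic `m × n` matrix
`X = (X_{ij})` in the polynomial ring `S = k[X_{ij}]`. -/
def detIdeal : Ideal (MvPolynomial (Fin m × Fin n) k) :=
  Ideal.span {f | ∃ (i₁ i₂ : Fin m) (j₁ j₂ : Fin n), i₁ < i₂ ∧ j₁ < j₂ ∧
    f = X (i₁, j₁) * X (i₂, j₂) - X (i₁, j₂) * X (i₂, j₁)}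

/-- The determinantal ring `R = S/I₂(X)`. -/
abbrev DetRing := MvPolynomial (Fin m × Fin n) k ⧸ detIdeal k m n

/-- `x_{ij}`, the image of `X_{ij}` in `R`. -/
def xbar (i : Fin m) (j : Fin n) : DetRing k m n :=
  Ideal.Quotient.mk _ (X (i, j))

/-- The graded maximal ideal `M = R₊`, generated by all the `x_{ij}`. -/
def maxIdeal : Ideal (DetRing k m n) :=
  Ideal.span (Set.range fun p : Fin m × Fin n => xbar k m n p.1 p.2)

/-- The ideal `Q = (x_{11}, x_{21}, …, x_{m1})` generated by the entries of the
first column of `X`. -/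
def colIdeal : Ideal (DetRing k m n) :=
  Ideal.span {y | ∃ (i : Fin m) (j : Fin n), (j : ℕ) = 0 ∧ y = xbar k m n i j}

/-- The ideal `𝔮 = (x_{1n}, …, x_{mn})` generated by the entries of the last
column of `X`. -/
def lastColIdeal : Ideal (DetRing k m n) :=
  Ideal.span {y | ∃ (i : Fin m) (j : Fin n), (j : ℕ) = n - 1 ∧ y = xbar k m n i j}

namespace Stmt5Aux

set_option linter.unusedSectionVars false
set_option linter.unusedVariables false

section General

/-- decrement `e` at `a` -/
def dec {ι : Type*} [DecidableEq ι] (e : ι → ℕ) (a : ι) : ι → ℕ :=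
  fun i => e i - if i = a then 1 else 0

lemma extract {M : Type*} [CommMonoid M] {ι : Type*} [Fintype ι] [DecidableEq ι] (v : ι → M)
    (e : ι → ℕ) (a : ι) (h : e a ≠ 0) :
    ∏ i, v i ^ e i = v a * ∏ i, v i ^ dec e a i := by
  rw [← Finset.mul_prod_erase Finset.univ (fun i => v i ^ e i) (Finset.mem_univ a),
      ← Finset.mul_prod_erase Finset.univ (fun i => v i ^ dec e a i) (Finset.mem_univ a),
      ← mul_assoc]
  have h1 : v a * v a ^ dec e a a = v a ^ e a := by
    have : dec e a a = e a - 1 := by simp [dec]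
    rw [this, ← pow_succ']
    congr 1
    omega
  rw [h1]
  congr 1
  refine Finset.prod_congr rfl fun i hi => ?_
  have hia : i ≠ a := Finset.ne_of_mem_erase hi
  simp [dec, hia]

lemma sum_dec {ι : Type*} [Fintype ι] [DecidableEq ι] (e : ι → ℕ) (a : ι) (h : e a ≠ 0) :
    ∑ i, dec e a i = (∑ i, e i) - 1 := by
  rw [← Finset.add_sum_erase Finset.univ (fun i => dec e a i) (Finset.mem_univ a),
      ← Finset.add_sum_erase Finset.univ e (Finset.mem_univ a)]
  have h2 : ∑ i ∈ Finset.univ.erase a, dec e a i = ∑ i ∈ Finset.univ.erase a, e i :=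
    Finset.sum_congr rfl fun i hi => by simp [dec, Finset.ne_of_mem_erase hi]
  have h3 : dec e a a = e a - 1 := by simp [dec]
  rw [h2, h3]
  omega

lemma span_range_pow {R : Type*} [CommRing R] {ι : Type*} [Fintype ι] [DecidableEq ι]
    (v : ι → R) (d : ℕ) :
    Ideal.span (Set.range v) ^ d =
      Ideal.span {y | ∃ e : ι → ℕ, (∑ i, e i) = d ∧ y = ∏ i, v i ^ e i} := by
  induction d with
  | zero =>
    rw [pow_zero, eq_comm, Ideal.one_eq_top, Ideal.eq_top_iff_one]
    exact Ideal.subset_span ⟨fun _ => 0, by simp, by simp⟩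
  | succ d ih =>
    rw [pow_succ, ih]
    apply le_antisymm
    · rw [Ideal.span_mul_span', Ideal.span_le]
      rintro y ⟨y1, ⟨e, he, rfl⟩, y2, ⟨i, rfl⟩, rfl⟩
      apply Ideal.subset_span
      refine ⟨fun j => e j + if j = i then 1 else 0, ?_, ?_⟩
      · rw [Finset.sum_add_distrib, he, Finset.sum_ite_eq' Finset.univ i fun _ => 1]
        simp
      · have hd : dec (fun j => e j + if j = i then 1 else 0) i = e := by
          funext j
          simp only [dec]
          split <;> omega
        have key := extract v (fun j => e j + if j = i then 1 else 0) i (by simp)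
        rw [hd] at key
        exact (key.trans (mul_comm _ _)).symm
    · rw [Ideal.span_le]
      rintro y ⟨e, he, rfl⟩
      have hex : ∃ i, e i ≠ 0 := by
        by_contra hc
        push_neg at hc
        simp [hc] at he
      obtain ⟨i, hi⟩ := hex
      rw [extract v e i hi, mul_comm (v i)]
      exact Ideal.mul_mem_mul
        (Ideal.subset_span ⟨dec e i, by rw [sum_dec e i hi, he]; omega, rfl⟩)
        (Ideal.subset_span ⟨i, rfl⟩)

lemma idealMu_eq {A : Type*} [CommRing A] (I : Ideal A) (C : ℕ)
    (upper : ∃ s : Finset A, s.card = C ∧ Ideal.span (s : Set A) = I)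
    (lower : ∀ s : Finset A, Ideal.span (s : Set A) = I → C ≤ s.card) : idealMu I = C := by
  obtain ⟨s, hs1, hs2⟩ := upper
  apply le_antisymm
  · exact Nat.sInf_le ⟨s, hs1, hs2⟩
  · refine le_csInf ⟨C, s, hs1, hs2⟩ ?_
    rintro c ⟨u, rfl, hu⟩
    exact lower u hu

end General

section Poly

variable {k : Type*} [Field k] {σ : Type*} [Fintype σ] [DecidableEq σ]

lemma degree_eq_sum (u : σ →₀ ℕ) : u.degree = ∑ i, u i :=
  Finset.sum_subset (Finset.subset_univ _) (fun i _ hi => Finsupp.notMem_support_iff.mp hi)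

lemma monomial_eq_prod (u : σ →₀ ℕ) :
    (monomial u (1:k)) = ∏ i, (X i : MvPolynomial σ k) ^ u i := by
  rw [← prod_X_pow_eq_monomial]
  exact Finset.prod_subset (Finset.subset_univ _) (fun i _ hi => by
    rw [Finsupp.notMem_support_iff.mp hi, pow_zero])

lemma X_prod_eq_monomial (e : σ → ℕ) :
    ∏ i, (X i : MvPolynomial σ k) ^ e i = monomial (Finsupp.equivFunOnFinite.symm e) (1:k) := by
  rw [monomial_eq_prod]
  exact Finset.prod_congr rfl fun i _ => by simp

lemma choose_le_card_of_span (d : ℕ) (t : Finset (MvPolynomial σ k))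
    (ht : Ideal.span (t : Set (MvPolynomial σ k)) =
      Ideal.span (Set.range (X : σ → MvPolynomial σ k)) ^ d) :
    (Fintype.card σ + d - 1).choose d ≤ t.card := by
  classical
  have hPd : Ideal.span (Set.range (X : σ → MvPolynomial σ k)) ^ d =
      Ideal.span ((fun u => monomial u (1:k)) '' {u : σ →₀ ℕ | u.degree = d}) := by
    rw [span_range_pow]
    congr 1
    ext y
    constructor
    · rintro ⟨e, he, rfl⟩
      refine ⟨Finsupp.equivFunOnFinite.symm e, ?_, ?_⟩
      · rw [Set.mem_setOf_eq, degree_eq_sum]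
        simpa using he
      · show monomial (Finsupp.equivFunOnFinite.symm e) (1:k) = _
        rw [monomial_eq_prod]
        simp
    · rintro ⟨u, hu, rfl⟩
      exact ⟨fun i => u i, by rw [← degree_eq_sum]; exact hu, monomial_eq_prod u⟩
  have hsupp : ∀ g ∈ t, ∀ u ∈ g.support, d ≤ u.degree := by
    intro g hg u hu
    have hgmem : g ∈ Ideal.span ((fun u => monomial u (1:k)) '' {u : σ →₀ ℕ | u.degree = d}) := by
      rw [← hPd, ← ht]
      exact Ideal.subset_span hg
    obtain ⟨s, hs, hle⟩ := mem_ideal_span_monomial_image.mp hgmem u hu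
    rw [← hs, degree_eq_sum, degree_eq_sum]
    exact Finset.sum_le_sum fun i _ => Finsupp.le_def.mp hle i
  have hcomp : ∀ (c g : MvPolynomial σ k), g ∈ t →
      homogeneousComponent d (c * g) = constantCoeff c • homogeneousComponent d g := by
    intro c g hg
    apply MvPolynomial.ext
    intro u
    rw [coeff_homogeneousComponent, MvPolynomial.coeff_smul, coeff_homogeneousComponent]
    by_cases hud : u.degree = d
    · rw [if_pos hud, if_pos hud, coeff_mul]
      rw [Finset.sum_eq_single ((0 : σ →₀ ℕ), u)]
      · simp [smul_eq_mul, MvPolynomial.constantCoeff_eq]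
      · rintro ⟨a, b⟩ hab hne
        have hab' : a + b = u := Finset.HasAntidiagonal.mem_antidiagonal.mp hab
        have ha : a ≠ 0 := by
          rintro rfl
          rw [zero_add] at hab'
          exact hne (by rw [hab'])
        by_cases hbg : MvPolynomial.coeff b g = 0
        · rw [hbg, mul_zero]
        · exfalso
          have hbd : d ≤ b.degree := hsupp g hg b (MvPolynomial.mem_support_iff.mpr hbg)
          have hadd : a.degree + b.degree = u.degree := by
            rw [← hab', degree_eq_sum, degree_eq_sum, degree_eq_sum, ← Finset.sum_add_distrib]
            rfl
          have ha0 : a.degree ≠ 0 := fun h => ha ((Finsupp.degree_eq_zero_iff a).mp h)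
          omega
      · intro h
        exact absurd (Finset.HasAntidiagonal.mem_antidiagonal.mpr (zero_add u)) h
    · rw [if_neg hud, if_neg hud, smul_zero]
  have hspan : ∀ u : σ →₀ ℕ, u.degree = d →
      (monomial u (1:k)) ∈
        Submodule.span k (↑(t.image (homogeneousComponent d)) : Set (MvPolynomial σ k)) := by
    intro u hu
    have hmem : monomial u (1:k) ∈ Ideal.span (t : Set (MvPolynomial σ k)) := by
      rw [ht, hPd]
      exact Ideal.subset_span ⟨u, hu, rfl⟩
    obtain ⟨f, -, hf⟩ := Submodule.mem_span_finset.mp hmem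
    have h1 : homogeneousComponent d (monomial u (1:k)) = monomial u 1 := by
      have hmem2 : (monomial u (1:k)) ∈ homogeneousSubmodule σ k d :=
        (mem_homogeneousSubmodule _ _).mpr (isHomogeneous_monomial _ hu)
      rw [homogeneousComponent_of_mem hmem2, if_pos rfl]
    rw [← h1, ← hf, map_sum]
    apply Submodule.sum_mem
    intro g hg
    rw [smul_eq_mul, hcomp (f g) g hg]
    exact Submodule.smul_mem _ _ (Submodule.subset_span (by
      rw [Finset.coe_image]
      exact Set.mem_image_of_mem _ hg))
  haveI : Fintype {P : σ → ℕ // ∑ i, P i = d} := Fintype.ofEquiv _ (Sym.equivNatSumOfFintype σ d)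
  set v : {P : σ → ℕ // ∑ i, P i = d} → MvPolynomial σ k :=
    fun e => monomial (Finsupp.equivFunOnFinite.symm e.1) 1 with hv
  have hvli : LinearIndependent k v := by
    have hb := (basisMonomials σ k).linearIndependent
    rw [coe_basisMonomials] at hb
    exact hb.comp _ (Finsupp.equivFunOnFinite.symm.injective.comp Subtype.val_injective)
  have hrange : Set.range v ⊆
      (Submodule.span k (↑(t.image (homogeneousComponent d)) : Set (MvPolynomial σ k)) :
        Set (MvPolynomial σ k)) := by
    rintro y ⟨e, rfl⟩
    exact hspan _ (by rw [degree_eq_sum]; simpa using e.2)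
  have hfin := linearIndependent_le_span' v hvli (↑(t.image (homogeneousComponent d))) hrange
  simp only [Cardinal.mk_fintype, Finset.coe_sort_coe, Fintype.card_coe, Nat.cast_le] at hfin
  have h1 : Fintype.card {P : σ → ℕ // ∑ i, P i = d} = (Fintype.card σ + d - 1).choose d := by
    rw [← Fintype.card_congr (Sym.equivNatSumOfFintype σ d), Sym.card_sym_eq_choose]
  calc (Fintype.card σ + d - 1).choose d = Fintype.card {P : σ → ℕ // ∑ i, P i = d} := h1.symm
    _ ≤ (t.image (homogeneousComponent d)).card := hfin
    _ ≤ t.card := Finset.card_image_le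

end Poly

section Det

variable (k : Type*) [Field k] (m n : ℕ)

lemma phi_aux : ∀ a ∈ detIdeal k m n,
    (MvPolynomial.aeval fun p : Fin m × Fin n =>
      (X p.1 : MvPolynomial (Fin m) k)).toRingHom a = 0 := by
  intro a ha
  have h : detIdeal k m n ≤ RingHom.ker (MvPolynomial.aeval fun p : Fin m × Fin n =>
      (X p.1 : MvPolynomial (Fin m) k)).toRingHom := by
    rw [detIdeal, Ideal.span_le]
    rintro f ⟨i₁, i₂, j₁, j₂, h1, h2, rfl⟩
    simp only [SetLike.mem_coe, RingHom.mem_ker, AlgHom.toRingHom_eq_coe, RingHom.coe_coe,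
      map_sub, map_mul, aeval_X]
    ring
  exact h ha

/-- The retraction `R → k[t₁, …, t_m]`, `x_{ij} ↦ t_i`. -/
def phi : DetRing k m n →+* MvPolynomial (Fin m) k :=
  Ideal.Quotient.lift (detIdeal k m n)
    (MvPolynomial.aeval fun p : Fin m × Fin n => (X p.1 : MvPolynomial (Fin m) k)).toRingHom
    (phi_aux k m n)

lemma phi_xbar (i : Fin m) (j : Fin n) : phi k m n (xbar k m n i j) = X i := by
  rw [phi, xbar, Ideal.Quotient.lift_mk]
  simp

lemma colIdeal_eq (hn : 0 < n) :
    colIdeal k m n = Ideal.span (Set.range fun i : Fin m => xbar k m n i ⟨0, hn⟩) := by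
  rw [colIdeal]
  congr 1
  ext y
  constructor
  · rintro ⟨i, j, hj, rfl⟩
    refine ⟨i, ?_⟩
    have : j = ⟨0, hn⟩ := Fin.ext hj
    rw [this]
  · rintro ⟨i, rfl⟩
    exact ⟨i, ⟨0, hn⟩, rfl, rfl⟩

lemma lastColIdeal_eq (hn : 0 < n) :
    lastColIdeal k m n = Ideal.span (Set.range fun i : Fin m => xbar k m n i ⟨n - 1, by omega⟩) := by
  rw [lastColIdeal]
  congr 1
  ext y
  constructor
  · rintro ⟨i, j, hj, rfl⟩
    refine ⟨i, ?_⟩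
    have : j = ⟨n - 1, by omega⟩ := Fin.ext hj
    rw [this]
  · rintro ⟨i, rfl⟩
    exact ⟨i, ⟨n - 1, by omega⟩, rfl, rfl⟩

lemma map_phi_col (hn : 0 < n) :
    Ideal.map (phi k m n) (colIdeal k m n) =
      Ideal.span (Set.range (X : Fin m → MvPolynomial (Fin m) k)) := by
  rw [colIdeal_eq k m n hn, Ideal.map_span, ← Set.range_comp]
  have : (phi k m n) ∘ (fun i : Fin m => xbar k m n i ⟨0, hn⟩) = X := by
    funext i
    exact phi_xbar k m n i _
  rw [this]

lemma map_phi_lastCol (hn : 0 < n) :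
    Ideal.map (phi k m n) (lastColIdeal k m n) =
      Ideal.span (Set.range (X : Fin m → MvPolynomial (Fin m) k)) := by
  rw [lastColIdeal_eq k m n hn, Ideal.map_span, ← Set.range_comp]
  have : (phi k m n) ∘ (fun i : Fin m => xbar k m n i ⟨n - 1, by omega⟩) = X := by
    funext i
    exact phi_xbar k m n i _
  rw [this]

lemma swap (hn2 : 2 ≤ n) (a b : Fin m) :
    xbar k m n a ⟨n - 1, by omega⟩ * xbar k m n b ⟨0, by omega⟩ =
      xbar k m n b ⟨n - 1, by omega⟩ * xbar k m n a ⟨0, by omega⟩ := by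
  have key : ∀ a b : Fin m, a < b →
      xbar k m n a ⟨n - 1, by omega⟩ * xbar k m n b ⟨0, by omega⟩ =
        xbar k m n b ⟨n - 1, by omega⟩ * xbar k m n a ⟨0, by omega⟩ := by
    intro a b hab
    have hmem : (X (a, (⟨0, by omega⟩ : Fin n)) * X (b, (⟨n - 1, by omega⟩ : Fin n)) -
        X (a, (⟨n - 1, by omega⟩ : Fin n)) * X (b, (⟨0, by omega⟩ : Fin n)) :
          MvPolynomial (Fin m × Fin n) k) ∈ detIdeal k m n := by
      rw [detIdeal]
      exact Ideal.subset_span ⟨a, b, ⟨0, by omega⟩, ⟨n - 1, by omega⟩, hab,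
        by rw [Fin.mk_lt_mk]; omega, rfl⟩
    have h0 := Ideal.Quotient.eq_zero_iff_mem.mpr hmem
    rw [map_sub, map_mul, map_mul, sub_eq_zero] at h0
    unfold xbar
    rw [← h0]
    exact mul_comm _ _
  rcases lt_trichotomy a b with h | h | h
  · exact key a b h
  · rw [h]
  · exact (key b a h).symm

lemma move (hn2 : 2 ≤ n) (f : Fin m → ℕ) (a b : Fin m) (ha : f a ≠ 0) (hb : f b ≠ 0) :
    xbar k m n a ⟨n - 1, by omega⟩ * ∏ i, xbar k m n i ⟨0, by omega⟩ ^ dec f a i =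
      xbar k m n b ⟨n - 1, by omega⟩ * ∏ i, xbar k m n i ⟨0, by omega⟩ ^ dec f b i := by
  by_cases hab : a = b
  · rw [hab]
  · have h1 : dec f a b ≠ 0 := by
      have hba : b ≠ a := fun hc => hab hc.symm
      simp only [dec, if_neg hba]
      omega
    have h2 : dec f b a ≠ 0 := by
      simp only [dec, if_neg hab]
      omega
    rw [extract (fun i => xbar k m n i ⟨0, by omega⟩) (dec f a) b h1,
        extract (fun i => xbar k m n i ⟨0, by omega⟩) (dec f b) a h2]
    have h3 : dec (dec f a) b = dec (dec f b) a := by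
      funext i
      simp only [dec]
      by_cases hia : i = a <;> by_cases hib : i = b <;> simp [hia, hib] <;> omega
    rw [h3, ← mul_assoc, ← mul_assoc, swap k m n hn2 a b]

end Det

end Stmt5Aux

/-- **Step in Lemma 3.3.** For every `ℓ ≥ 0`,
`μ_R(𝔮·Q^ℓ) = μ_R(Q^{ℓ+1}) = C(m+ℓ, ℓ+1)`; in particular `Q^{ℓ+1}` is minimally
generated by the `C(m+ℓ, ℓ+1)` monomials of degree `ℓ+1` in `x_{11}, …, x_{m1}`
(which indeed span `Q^{ℓ+1}`). -/
theorem stmt_5 [Infinite k] (hm : 2 ≤ m) (hmn : m ≤ n) (ℓ : ℕ) :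
    idealMu (lastColIdeal k m n * colIdeal k m n ^ ℓ) = Nat.choose (m + ℓ) (ℓ + 1) ∧
    idealMu (colIdeal k m n ^ (ℓ + 1)) = Nat.choose (m + ℓ) (ℓ + 1) ∧
    Ideal.span {y : DetRing k m n | ∃ e : Fin m → ℕ, (∑ i, e i) = ℓ + 1 ∧
        y = ∏ i, (xbar k m n i ⟨0, by omega⟩) ^ e i} =
      colIdeal k m n ^ (ℓ + 1) := by
  classical
  have hn0 : 0 < n := by omega
  have hn2 : 2 ≤ n := by omega
  have hm0 : 0 < m := by omega
  set vQ : Fin m → DetRing k m n := fun i => xbar k m n i ⟨0, hn0⟩ with hvQ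
  set vL : Fin m → DetRing k m n := fun i => xbar k m n i ⟨n - 1, by omega⟩ with hvL
  have hQ : colIdeal k m n = Ideal.span (Set.range vQ) := Stmt5Aux.colIdeal_eq k m n hn0
  have hL : lastColIdeal k m n = Ideal.span (Set.range vL) := Stmt5Aux.lastColIdeal_eq k m n hn0
  have hQpow : ∀ d : ℕ, colIdeal k m n ^ d =
      Ideal.span {y | ∃ e : Fin m → ℕ, (∑ i, e i) = d ∧ y = ∏ i, vQ i ^ e i} := by
    intro d
    rw [hQ, Stmt5Aux.span_range_pow]
  have third : Ideal.span {y : DetRing k m n | ∃ e : Fin m → ℕ, (∑ i, e i) = ℓ + 1 ∧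
      y = ∏ i, (xbar k m n i ⟨0, by omega⟩) ^ e i} = colIdeal k m n ^ (ℓ + 1) :=
    (hQpow (ℓ + 1)).symm
  -- the transfer of lower bounds along `phi`
  have hmapQ := Stmt5Aux.map_phi_col k m n hn0
  have hmapL := Stmt5Aux.map_phi_lastCol k m n hn0
  have lower : ∀ J : Ideal (DetRing k m n),
      Ideal.map (Stmt5Aux.phi k m n) J =
        Ideal.span (Set.range (X : Fin m → MvPolynomial (Fin m) k)) ^ (ℓ + 1) →
      ∀ s : Finset (DetRing k m n), Ideal.span (s : Set (DetRing k m n)) = J →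
        (m + ℓ).choose (ℓ + 1) ≤ s.card := by
    intro J hJ s hs
    have h1 : Ideal.span ((s.image (Stmt5Aux.phi k m n) :
        Finset (MvPolynomial (Fin m) k)) : Set (MvPolynomial (Fin m) k)) =
        Ideal.span (Set.range (X : Fin m → MvPolynomial (Fin m) k)) ^ (ℓ + 1) := by
      rw [Finset.coe_image, ← Ideal.map_span, hs, hJ]
    have h2 := Stmt5Aux.choose_le_card_of_span (ℓ + 1) (s.image (Stmt5Aux.phi k m n)) h1
    rw [Fintype.card_fin] at h2
    have h3 : m + (ℓ + 1) - 1 = m + ℓ := by omega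
    rw [h3] at h2
    exact le_trans h2 Finset.card_image_le
  -- the index finset
  set E : Finset (Fin m → ℕ) := Finset.finAntidiagonal m (ℓ + 1) with hE
  have hmemE : ∀ e : Fin m → ℕ, e ∈ E ↔ (∑ i, e i) = ℓ + 1 := fun e =>
    Finset.mem_finAntidiagonal
  have hEcard : E.card = (m + ℓ).choose (ℓ + 1) := by
    rw [← Fintype.card_coe]
    rw [Fintype.card_congr ((Equiv.subtypeEquivRight hmemE).trans
      (Sym.equivNatSumOfFintype (Fin m) (ℓ + 1)).symm)]
    rw [Sym.card_sym_eq_choose, Fintype.card_fin]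
    congr 1
  -- phi on monomials
  have hphiQ : ∀ i, Stmt5Aux.phi k m n (vQ i) = X i := fun i => Stmt5Aux.phi_xbar k m n i _
  have hphiL : ∀ i, Stmt5Aux.phi k m n (vL i) = X i := fun i => Stmt5Aux.phi_xbar k m n i _
  have hprod : ∀ e : Fin m → ℕ, Stmt5Aux.phi k m n (∏ i, vQ i ^ e i) =
      monomial (Finsupp.equivFunOnFinite.symm e) (1 : k) := by
    intro e
    rw [map_prod, ← Stmt5Aux.X_prod_eq_monomial]
    exact Finset.prod_congr rfl fun i _ => by rw [map_pow, hphiQ]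
  -- the generating set of Q^(ℓ+1)
  set g1 : (Fin m → ℕ) → DetRing k m n := fun e => ∏ i, vQ i ^ e i with hg1
  have hg1inj : Function.Injective g1 := by
    intro a b hab
    have h2 : Stmt5Aux.phi k m n (g1 a) = Stmt5Aux.phi k m n (g1 b) := congrArg _ hab
    rw [hprod a, hprod b] at h2
    exact Finsupp.equivFunOnFinite.symm.injective
      (monomial_left_injective (one_ne_zero (α := k)) h2)
  have ht1card : (E.image g1).card = (m + ℓ).choose (ℓ + 1) := by
    rw [Finset.card_image_of_injective _ hg1inj, hEcard]
  have ht1span : Ideal.span ((E.image g1 : Finset (DetRing k m n)) : Set (DetRing k m n)) =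
      colIdeal k m n ^ (ℓ + 1) := by
    rw [Finset.coe_image, hQpow (ℓ + 1)]
    congr 1
    ext y
    constructor
    · rintro ⟨e, he, rfl⟩
      exact ⟨e, (hmemE e).mp (Finset.mem_coe.mp he), rfl⟩
    · rintro ⟨e, he, rfl⟩
      exact ⟨e, Finset.mem_coe.mpr ((hmemE e).mpr he), rfl⟩
  have hmu2 : idealMu (colIdeal k m n ^ (ℓ + 1)) = (m + ℓ).choose (ℓ + 1) := by
    refine Stmt5Aux.idealMu_eq _ _ ⟨E.image g1, ht1card, ht1span⟩ ?_
    intro s hs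
    refine lower _ ?_ s hs
    rw [Ideal.map_pow, hmapQ]
  -- the generating set of 𝔮 * Q^ℓ
  set idx : (Fin m → ℕ) → Fin m :=
    fun e => if h : ∃ i, e i ≠ 0 then h.choose else ⟨0, hm0⟩ with hidxdef
  have hidx : ∀ e : Fin m → ℕ, (∑ i, e i) ≠ 0 → e (idx e) ≠ 0 := by
    intro e he
    have hex : ∃ i, e i ≠ 0 := by
      by_contra hc
      push_neg at hc
      exact he (Finset.sum_eq_zero fun i _ => hc i)
    simp only [hidxdef, dif_pos hex]
    exact hex.choose_spec
  set g2 : (Fin m → ℕ) → DetRing k m n :=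
    fun e => vL (idx e) * ∏ i, vQ i ^ Stmt5Aux.dec e (idx e) i with hg2
  have hprod2 : ∀ e : Fin m → ℕ, (∑ i, e i) = ℓ + 1 →
      Stmt5Aux.phi k m n (g2 e) = monomial (Finsupp.equivFunOnFinite.symm e) (1 : k) := by
    intro e he
    have h1 : e (idx e) ≠ 0 := hidx e (by omega)
    rw [hg2]
    simp only
    rw [map_mul, hphiL, hprod, ← Stmt5Aux.X_prod_eq_monomial, ← Stmt5Aux.X_prod_eq_monomial]
    exact (Stmt5Aux.extract X e (idx e) h1).symm
  have hg2injOn : Set.InjOn g2 (E : Set (Fin m → ℕ)) := by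
    intro a ha b hb hab
    have h2 : Stmt5Aux.phi k m n (g2 a) = Stmt5Aux.phi k m n (g2 b) := congrArg _ hab
    rw [hprod2 a ((hmemE a).mp (Finset.mem_coe.mp ha)),
        hprod2 b ((hmemE b).mp (Finset.mem_coe.mp hb))] at h2
    exact Finsupp.equivFunOnFinite.symm.injective
      (monomial_left_injective (one_ne_zero (α := k)) h2)
  have ht2card : (E.image g2).card = (m + ℓ).choose (ℓ + 1) := by
    rw [Finset.card_image_of_injOn hg2injOn, hEcard]
  have ht2span : Ideal.span ((E.image g2 : Finset (DetRing k m n)) : Set (DetRing k m n)) =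
      lastColIdeal k m n * colIdeal k m n ^ ℓ := by
    apply le_antisymm
    · rw [Ideal.span_le]
      intro y hy
      rw [Finset.coe_image] at hy
      obtain ⟨e, he, rfl⟩ := hy
      have he' : (∑ i, e i) = ℓ + 1 := (hmemE e).mp (Finset.mem_coe.mp he)
      have h1 : e (idx e) ≠ 0 := hidx e (by omega)
      apply Ideal.mul_mem_mul
      · rw [hL]
        exact Ideal.subset_span ⟨idx e, rfl⟩
      · rw [hQpow ℓ]
        exact Ideal.subset_span ⟨Stmt5Aux.dec e (idx e),
          by rw [Stmt5Aux.sum_dec e _ h1, he']; omega, rfl⟩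

    · rw [hL, hQpow ℓ, Ideal.span_mul_span', Ideal.span_le]
      rintro y ⟨y1, ⟨a, rfl⟩, y2, ⟨e, he, rfl⟩, rfl⟩
      set f : Fin m → ℕ := fun i => e i + if i = a then 1 else 0 with hf
      have hfsum : (∑ i, f i) = ℓ + 1 := by
        rw [hf]
        rw [Finset.sum_add_distrib, he, Finset.sum_ite_eq' Finset.univ a fun _ => 1]
        simp
      have hfE : f ∈ E := (hmemE f).mpr hfsum
      have hfa : f a ≠ 0 := by simp [hf]
      have hdfa : Stmt5Aux.dec f a = e := by
        funext j
        simp only [Stmt5Aux.dec, hf]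
        split <;> omega
      have hkey : vL a * ∏ i, vQ i ^ e i = g2 f := by
        rw [← hdfa]
        exact Stmt5Aux.move k m n hn2 f a (idx f) hfa (hidx f (by omega))
      have hmem : g2 f ∈ Ideal.span ((E.image g2 : Finset (DetRing k m n)) : Set (DetRing k m n)) :=
        Ideal.subset_span (Finset.mem_coe.mpr (Finset.mem_image_of_mem _ hfE))
      rw [← hkey] at hmem
      exact hmem
  have hmu1 : idealMu (lastColIdeal k m n * colIdeal k m n ^ ℓ) = (m + ℓ).choose (ℓ + 1) := by
    refine Stmt5Aux.idealMu_eq _ _ ⟨E.image g2, ht2card, ht2span⟩ ?_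
    intro s hs
    refine lower _ ?_ s hs
    rw [Ideal.map_mul, Ideal.map_pow, hmapL, hmapQ, ← pow_succ']
  exact ⟨hmu1, hmu2, third⟩
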